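/- For every odd integer x > 1, the number of ordered pairs of positive integers (t, l) with l odd, gcd(t, l) = 1, and x = l(l+2t) equals 2^{ω(x)−1}, where ω(x) is the number of distinct prime divisors of x. -/

import Mathlib

open Finset

private lemma odd_of_dvd_odd {d x : ℕ} (hd : d ∣ x) (hodd : Odd x) : Odd d := by
  rcases Nat.even_or_odd d with he | ho
  · exfalso
    obtain ⟨c, rfl⟩ := hd
    exact (Nat.not_odd_iff_even.mpr (he.mul_right c)) hodd
  · exact ho

private lemma unitary_card (x : ℕ) (hx : 1 < x) :
    (x.divisors.filter (fun d => Nat.Coprime d (x / d))).card = 2 ^ x.primeFactors.card := by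
  have hx0 : x ≠ 0 := by omega
  have hxprod : x = ∏ p ∈ x.primeFactors, p ^ x.factorization p := by
    conv_lhs => rw [← Nat.factorization_prod_pow_eq_self hx0]
    rfl
  rw [← Finset.card_powerset]
  refine Finset.card_bij' (fun d _ => d.primeFactors)
    (fun P _ => ∏ p ∈ P, p ^ x.factorization p) ?_ ?_ ?_ ?_
  · -- maps into powerset
    intro d hd
    rw [Finset.mem_filter, Nat.mem_divisors] at hd
    exact Finset.mem_powerset.mpr (Nat.primeFactors_mono hd.1.1 hx0)
  · -- maps into filter
    intro P hP
    rw [Finset.mem_powerset] at hP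
    set A := ∏ p ∈ P, p ^ x.factorization p with hA
    set B := ∏ p ∈ x.primeFactors \ P, p ^ x.factorization p with hB
    have hdvd : A ∣ x := by
      conv_rhs => rw [hxprod]
      exact Finset.prod_dvd_prod_of_subset P x.primeFactors _ hP
    have hne : A ≠ 0 := by
      apply Finset.prod_ne_zero_iff.mpr
      intro p hp
      exact pow_ne_zero _ (Nat.Prime.ne_zero (Nat.prime_of_mem_primeFactors (hP hp)))
    rw [Finset.mem_filter, Nat.mem_divisors]
    refine ⟨⟨hdvd, hx0⟩, ?_⟩
    have hsplit : x = A * B := by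
      rw [hA, hB, mul_comm, Finset.prod_sdiff hP]
      exact hxprod
    have hquot : x / A = B := by
      rw [hsplit, Nat.mul_div_cancel_left _ (Nat.pos_of_ne_zero hne)]
    show Nat.Coprime A (x / A)
    rw [hquot, hA, hB]
    apply Nat.Coprime.prod_left
    intro p hp
    apply Nat.Coprime.prod_right
    intro q hq
    rw [Finset.mem_sdiff] at hq
    have hpq : p ≠ q := fun h => hq.2 (h ▸ hp)
    exact Nat.Coprime.pow _ _ ((Nat.coprime_primes (Nat.prime_of_mem_primeFactors (hP hp))
      (Nat.prime_of_mem_primeFactors hq.1)).mpr hpq)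
  · -- left inverse
    intro d hd
    rw [Finset.mem_filter, Nat.mem_divisors] at hd
    obtain ⟨⟨hdvd, _⟩, hcop⟩ := hd
    have hd0 : d ≠ 0 := by
      rintro rfl
      simp at hdvd
      omega
    have hdprod : d = ∏ p ∈ d.primeFactors, p ^ d.factorization p := by
      conv_lhs => rw [← Nat.factorization_prod_pow_eq_self hd0]
      rfl
    conv_rhs => rw [hdprod]
    apply Finset.prod_congr rfl
    intro p hp
    congr 1
    have hq0 : x / d ≠ 0 := by
      intro h
      rw [Nat.div_eq_zero_iff] at h
      exact absurd (Nat.le_of_dvd (by omega) hdvd) (by omega)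
    have hfac : x.factorization = d.factorization + (x / d).factorization := by
      conv_lhs => rw [(Nat.mul_div_cancel' hdvd).symm]
      exact Nat.factorization_mul hd0 hq0
    have hnd : ¬ p ∣ (x / d) := by
      intro hpdvd
      have hpp := Nat.prime_of_mem_primeFactors hp
      have h1 : p ∣ Nat.gcd d (x / d) := Nat.dvd_gcd (Nat.dvd_of_mem_primeFactors hp) hpdvd
      rw [hcop] at h1
      have := Nat.dvd_one.mp h1
      have := hpp.one_lt
      omega
    have hz : (x / d).factorization p = 0 := Nat.factorization_eq_zero_of_not_dvd hnd
    rw [hfac]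
    simp [hz]
  · -- right inverse
    intro P hP
    rw [Finset.mem_powerset] at hP
    ext q
    simp only [Nat.mem_primeFactors]
    constructor
    · rintro ⟨hq, hdvd, hne⟩
      obtain ⟨p, hp, hqp⟩ := (Prime.exists_mem_finset_dvd hq.prime hdvd)
      have hpp := Nat.prime_of_mem_primeFactors (hP hp)
      have : q = p := (Nat.prime_dvd_prime_iff_eq hq hpp).mp (hq.dvd_of_dvd_pow hqp)
      exact this ▸ hp
    · intro hq
      have hqp := Nat.prime_of_mem_primeFactors (hP hq)
      have hpos : 0 < x.factorization q := Nat.Prime.factorization_pos_of_dvd hqp (by omega)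
        (Nat.dvd_of_mem_primeFactors (hP hq))
      refine ⟨hqp, dvd_trans (dvd_pow_self q hpos.ne') (Finset.dvd_prod_of_mem _ hq), ?_⟩
      apply Finset.prod_ne_zero_iff.mpr
      intro p hp
      exact pow_ne_zero _ (Nat.prime_of_mem_primeFactors (hP hp)).ne_zero

private lemma half_card (x : ℕ) (hx : 1 < x) :
    (x.divisors.filter (fun d => Nat.Coprime d (x / d) ∧ d * d < x)).card
      = 2 ^ (x.primeFactors.card - 1) := by
  have hx0 : x ≠ 0 := by omega
  classical
  have hsq : ∀ d, d ∈ x.divisors → Nat.Coprime d (x / d) → d * d ≠ x := by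
    intro d hd hcop heq
    have hd0 : 0 < d := Nat.pos_of_mem_divisors hd
    have hxd : x / d = d := by rw [← heq, Nat.mul_div_cancel_left _ hd0]
    rw [hxd] at hcop
    have h1 : d = 1 := by simpa [Nat.Coprime, Nat.gcd_self] using hcop
    subst h1
    simp at heq
    omega
  -- split into two halves of equal size
  have hcount : (x.divisors.filter (fun d => Nat.Coprime d (x / d) ∧ d * d < x)).card
      + (x.divisors.filter (fun d => Nat.Coprime d (x / d) ∧ x < d * d)).card
      = 2 ^ x.primeFactors.card := by
    rw [← unitary_card x hx]
    have h1 : x.divisors.filter (fun d => Nat.Coprime d (x / d) ∧ d * d < x)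
        = (x.divisors.filter (fun d => Nat.Coprime d (x / d))).filter (fun d => d * d < x) := by
      rw [Finset.filter_filter]
    have h2 : x.divisors.filter (fun d => Nat.Coprime d (x / d) ∧ x < d * d)
        = (x.divisors.filter (fun d => Nat.Coprime d (x / d))).filter (fun d => ¬ d * d < x) := by
      rw [Finset.filter_filter]
      apply Finset.filter_congr
      intro d hd
      rw [Nat.mem_divisors] at hd
      constructor
      · rintro ⟨hc, hlt⟩; exact ⟨hc, by omega⟩
      · rintro ⟨hc, hlt⟩
        refine ⟨hc, ?_⟩
        have := hsq d (Nat.mem_divisors.mpr hd) hc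
        omega
    rw [h1, h2, Finset.card_filter_add_card_filter_not]
  -- bijection between the two halves
  have hbij : (x.divisors.filter (fun d => Nat.Coprime d (x / d) ∧ d * d < x)).card
      = (x.divisors.filter (fun d => Nat.Coprime d (x / d) ∧ x < d * d)).card := by
    refine Finset.card_bij' (fun d _ => x / d) (fun d _ => x / d) ?_ ?_ ?_ ?_
    · intro d hd
      rw [Finset.mem_filter, Nat.mem_divisors] at hd
      obtain ⟨⟨hdvd, _⟩, hcop, hlt⟩ := hd
      have hd0 : 0 < d := Nat.pos_of_dvd_of_pos hdvd (by omega)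
      have hxdd : x / (x / d) = d := Nat.div_div_self hdvd hx0
      have hdlt : d < x / d := by
        have : d * d < d * (x / d) := by rw [Nat.mul_div_cancel' hdvd]; exact hlt
        exact lt_of_mul_lt_mul_left this (Nat.zero_le d)
      rw [Finset.mem_filter, Nat.mem_divisors]
      refine ⟨⟨Nat.div_dvd_of_dvd hdvd, hx0⟩, by rw [hxdd]; exact hcop.symm, ?_⟩
      calc x = d * (x / d) := (Nat.mul_div_cancel' hdvd).symm
        _ < (x / d) * (x / d) := by
            apply Nat.mul_lt_mul_of_lt_of_le hdlt (le_refl _)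
            omega
    · intro d hd
      rw [Finset.mem_filter, Nat.mem_divisors] at hd
      obtain ⟨⟨hdvd, _⟩, hcop, hlt⟩ := hd
      have hd0 : 0 < d := Nat.pos_of_dvd_of_pos hdvd (by omega)
      have hxdd : x / (x / d) = d := Nat.div_div_self hdvd hx0
      have hdgt : x / d < d := by
        have : (x / d) * d < d * d := by rw [mul_comm, Nat.mul_div_cancel' hdvd]; exact hlt
        exact lt_of_mul_lt_mul_right this (Nat.zero_le d)
      have hq0 : 0 < x / d := Nat.div_pos (Nat.le_of_dvd (by omega) hdvd) hd0
      rw [Finset.mem_filter, Nat.mem_divisors]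
      refine ⟨⟨Nat.div_dvd_of_dvd hdvd, hx0⟩, by rw [hxdd]; exact hcop.symm, ?_⟩
      calc (x / d) * (x / d) < (x / d) * d := by
            exact Nat.mul_lt_mul_of_le_of_lt (le_refl _) hdgt hq0
        _ = x := by rw [mul_comm]; exact Nat.mul_div_cancel' hdvd
    · intro d hd
      rw [Finset.mem_filter, Nat.mem_divisors] at hd
      exact Nat.div_div_self hd.1.1 hx0
    · intro d hd
      rw [Finset.mem_filter, Nat.mem_divisors] at hd
      exact Nat.div_div_self hd.1.1 hx0
  have hω : 0 < x.primeFactors.card :=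
    Finset.card_pos.mpr (Nat.nonempty_primeFactors.mpr hx)
  have hpow : 2 ^ x.primeFactors.card = 2 * 2 ^ (x.primeFactors.card - 1) := by
    conv_lhs => rw [show x.primeFactors.card = (x.primeFactors.card - 1) + 1 by omega]
    rw [pow_succ]
    ring
  omega

theorem count_representations_odd_leg (x : ℕ) (hx : 1 < x) (hodd : Odd x) :
    Nat.card {p : ℕ × ℕ // 0 < p.1 ∧ 0 < p.2 ∧ Odd p.2 ∧
      Nat.gcd p.1 p.2 = 1 ∧ x = p.2 * (p.2 + 2 * p.1)} =
      2 ^ (x.primeFactors.card - 1) := by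
  classical
  have hx0 : x ≠ 0 := by omega
  set T := x.divisors.filter (fun d => Nat.Coprime d (x / d) ∧ d * d < x) with hT
  have hmem : ∀ p : ℕ × ℕ, (0 < p.1 ∧ 0 < p.2 ∧ Odd p.2 ∧
      Nat.gcd p.1 p.2 = 1 ∧ x = p.2 * (p.2 + 2 * p.1)) → p.2 ∈ T := by
    rintro ⟨t, l⟩ ⟨ht, hl, hlodd, hcop, hxeq⟩
    simp only at ht hl hlodd hcop hxeq
    have hdvd : l ∣ x := ⟨l + 2 * t, hxeq⟩
    have hquot : x / l = l + 2 * t := by rw [hxeq, Nat.mul_div_cancel_left _ hl]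
    rw [hT, Finset.mem_filter, Nat.mem_divisors]
    refine ⟨⟨hdvd, hx0⟩, ?_, ?_⟩
    · rw [hquot]
      have h2 : Nat.Coprime l 2 := hlodd.coprime_two_right
      have ht' : Nat.Coprime l t := (Nat.coprime_comm.mp hcop)
      have hlt2 : Nat.Coprime l (2 * t) := Nat.Coprime.mul_right h2 ht'
      rwa [add_comm, Nat.coprime_add_self_right]
    · show l * l < x
      rw [hxeq]
      have h1 : l < l + 2 * t := by omega
      exact Nat.mul_lt_mul_of_le_of_lt (le_refl l) h1 hl
  have key : Nat.card {p : ℕ × ℕ // 0 < p.1 ∧ 0 < p.2 ∧ Odd p.2 ∧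
      Nat.gcd p.1 p.2 = 1 ∧ x = p.2 * (p.2 + 2 * p.1)} = Nat.card {d // d ∈ T} := by
    apply Nat.card_eq_of_bijective (fun p => ⟨p.val.2, hmem p.val p.prop⟩)
    constructor
    · -- injective
      rintro ⟨⟨t₁, l₁⟩, h1⟩ ⟨⟨t₂, l₂⟩, h2⟩ heq
      simp only [Subtype.mk.injEq] at heq
      obtain ⟨ht₁, hl₁, _, _, hx₁⟩ := h1
      obtain ⟨ht₂, hl₂, _, _, hx₂⟩ := h2
      simp only at ht₁ hl₁ hx₁ ht₂ hl₂ hx₂ heq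
      subst heq
      have hmul : l₁ * (l₁ + 2 * t₁) = l₁ * (l₁ + 2 * t₂) := by rw [← hx₁, ← hx₂]
      have heq2 : l₁ + 2 * t₁ = l₁ + 2 * t₂ := Nat.eq_of_mul_eq_mul_left hl₁ hmul
      simp only [Subtype.mk.injEq, Prod.mk.injEq]
      exact ⟨by omega, trivial⟩
    · -- surjective
      rintro ⟨d, hd⟩
      have hd' := hd
      rw [hT, Finset.mem_filter, Nat.mem_divisors] at hd'
      obtain ⟨⟨hdvd, _⟩, hcop, hlt⟩ := hd'
      have hd0 : 0 < d := Nat.pos_of_dvd_of_pos hdvd (by omega)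
      have hmeq : x = d * (x / d) := (Nat.mul_div_cancel' hdvd).symm
      set m := x / d with hm
      have hdodd : Odd d := odd_of_dvd_odd hdvd hodd
      have hmodd : Odd m := odd_of_dvd_odd (Nat.div_dvd_of_dvd hdvd) hodd
      have hdlt : d < m := by
        have : d * d < d * m := by rw [← hmeq]; exact hlt
        exact lt_of_mul_lt_mul_left this (Nat.zero_le d)
      have heven : Even (m - d) := Nat.Odd.sub_odd hmodd hdodd
      obtain ⟨k, hk⟩ := heven
      have hk2 : m = d + 2 * k := by omega
      have hkpos : 0 < k := by omega
      have hcopk : Nat.gcd k d = 1 := by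
        have h1 : Nat.Coprime d (d + 2 * k) := hk2 ▸ hcop
        have h2 : Nat.Coprime d (2 * k) := by
          rwa [add_comm, Nat.coprime_add_self_right] at h1
        have h3 : Nat.Coprime d k := Nat.Coprime.coprime_dvd_right (dvd_mul_left k 2) h2
        exact h3.symm
      have hxeq2 : x = d * (d + 2 * k) := by rw [← hk2, ← hmeq]
      exact ⟨⟨(k, d), ⟨hkpos, hd0, hdodd, hcopk, hxeq2⟩⟩, Subtype.ext rfl⟩
  rw [key, Nat.card_eq_fintype_card, Fintype.card_coe]
  exact half_card x hx
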